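/- Let q ∈ (-1,1], q ≠ 0. For all natural numbers n and m with m ≤ n, the inversion (orthogonality) relations hold: Σ_{k=m}^{n} s(n,k,q) S(k,m,q) = δ_{n,m} and Σ_{k=m}^{n} S(n,k,q) s(k,m,q) = δ_{n,m}, where δ_{n,m} is the Kronecker delta. -/

import Mathlib

open Finset

/-- The q-integer `[m] = (1 - q^m)/(1 - q)`, with `[m] = m` when `q = 1`. -/
noncomputable def qInt (q : ℝ) (m : ℤ) : ℝ := if q = 1 then m else (1 - q ^ m) / (1 - q)

/-- The q-factorial `[n]! = [n][n-1]⋯[1]`, `[0]! = 1`. -/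
noncomputable def qFact (q : ℝ) : ℕ → ℝ
  | 0 => 1
  | n + 1 => qInt q (n + 1) * qFact q n

/-- The q-binomial coefficient `(n choose k)_q = [n]!/([n-k]![k]!)`. -/
noncomputable def qBinom (q : ℝ) (n k : ℕ) : ℝ := qFact q n / (qFact q (n - k) * qFact q k)

/-- The q-deformed Stirling numbers of the second kind, defined by the recurrence
`S(n+1,k,q) = q^(k-1) S(n,k-1,q) + [k] S(n,k,q)`, with `S(0,0,q)=1`, `S(n,0,q)=0` for `n ≥ 1`,
and `S(n,k,q) = 0` for `k > n`. -/
noncomputable def qStirling2 (q : ℝ) : ℕ → ℕ → ℝ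
  | 0, 0 => 1
  | 0, _ + 1 => 0
  | _ + 1, 0 => 0
  | n + 1, k + 1 => q ^ k * qStirling2 q n k + qInt q (k + 1) * qStirling2 q n (k + 1)

/-- The q-deformed Stirling numbers of the first kind, defined by the recurrence
`s(n+1,k,q) = q^(-n) (s(n,k-1,q) - [n] s(n,k,q))`, with `s(0,0,q)=1`, `s(n,0,q)=0` for `n ≥ 1`,
and `s(n,k,q) = 0` for `k > n`. -/
noncomputable def qStirling1 (q : ℝ) : ℕ → ℕ → ℝ
  | 0, 0 => 1
  | 0, _ + 1 => 0
  | _ + 1, 0 => 0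
  | n + 1, k + 1 => q ^ (-(n : ℤ)) * (qStirling1 q n k - qInt q n * qStirling1 q n (k + 1))

lemma qInt_zero (q : ℝ) : qInt q 0 = 0 := by simp [qInt]

lemma qStirling2_vanish (q : ℝ) : ∀ n k : ℕ, n < k → qStirling2 q n k = 0 := by
  intro n
  induction n with
  | zero =>
    intro k hk
    match k, hk with
    | k+1, _ => rfl
  | succ n ih =>
    intro k hk
    match k, hk with
    | k+1, hk =>
      have h1 : n < k := by omega
      have h2 : n < k+1 := by omega
      simp [qStirling2, ih k h1, ih (k+1) h2]

lemma qStirling1_vanish (q : ℝ) : ∀ n k : ℕ, n < k → qStirling1 q n k = 0 := by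
  intro n
  induction n with
  | zero =>
    intro k hk
    match k, hk with
    | k+1, _ => rfl
  | succ n ih =>
    intro k hk
    match k, hk with
    | k+1, hk =>
      have h1 : n < k := by omega
      have h2 : n < k+1 := by omega
      simp [qStirling1, ih k h1, ih (k+1) h2]

lemma A_eq (q : ℝ) (hq0 : q ≠ 0) :
    ∀ n m : ℕ, ∑ k ∈ range (n+1), qStirling1 q n k * qStirling2 q k m
      = if n = m then (1:ℝ) else 0 := by
  intro n
  induction n with
  | zero =>
    intro m
    cases m with
    | zero => simp [qStirling1, qStirling2]
    | succ m => simp [qStirling1, qStirling2]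
  | succ n ih =>
    intro m
    rw [Finset.sum_range_succ']
    have h0 : qStirling1 q (n+1) 0 = 0 := rfl
    rw [h0]
    cases m with
    | zero =>
      have hz : ∀ i : ℕ, qStirling2 q (i+1) 0 = 0 := fun i => rfl
      simp [hz, qStirling2]
    | succ m =>
      have key : ∀ i : ℕ, qStirling1 q (n+1) (i+1) * qStirling2 q (i+1) (m+1)
          = q ^ (-(n:ℤ)) * (q ^ m * (qStirling1 q n i * qStirling2 q i m)
            + qInt q (m+1) * (qStirling1 q n i * qStirling2 q i (m+1))
            - qInt q n * (qStirling1 q n (i+1) * qStirling2 q (i+1) (m+1))) := by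
        intro i
        simp only [qStirling1, qStirling2]
        ring
      rw [Finset.sum_congr rfl fun i _ => key i, ← Finset.mul_sum,
        Finset.sum_sub_distrib, Finset.sum_add_distrib,
        ← Finset.mul_sum, ← Finset.mul_sum, ← Finset.mul_sum]
      have hz : ∑ i ∈ range (n+1), qStirling1 q n (i+1) * qStirling2 q (i+1) (m+1)
          = if n = m+1 then (1:ℝ) else 0 := by
        have e1 := Finset.sum_range_succ' (fun k => qStirling1 q n k * qStirling2 q k (m+1)) (n+1)
        have e2 := Finset.sum_range_succ (fun k => qStirling1 q n k * qStirling2 q k (m+1)) (n+1)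
        have e3 : qStirling2 q 0 (m+1) = 0 := rfl
        have e4 : qStirling1 q n (n+1) = 0 := qStirling1_vanish q n (n+1) (by omega)
        have e5 := ih (m+1)
        simp only [e3, e4, mul_zero, zero_mul, add_zero] at e1 e2
        rw [e2] at e1
        rw [← e1, e5]
      rw [ih m, ih (m+1), hz]
      by_cases h1 : n = m
      · subst h1
        have hne : ¬ n = n + 1 := by omega
        have hpow : q ^ (-(n:ℤ)) * q ^ n = 1 := by
          rw [← zpow_natCast q n, ← zpow_add₀ hq0]
          simp
        simp only [hne, if_false, if_pos rfl, mul_zero, zero_mul, add_zero, sub_zero, mul_one]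
        simpa using hpow
      · by_cases h2 : n = m + 1
        · subst h2
          have hne : ¬ (m + 1 + 1 = m + 1) := by omega
          simp [h1, hne]
        · have hne : ¬ (n + 1 = m + 1) := by omega
          simp [h1, h2, hne]

lemma B_eq (q : ℝ) (hq0 : q ≠ 0) :
    ∀ n m : ℕ, ∑ k ∈ range (n+1), qStirling2 q n k * qStirling1 q k m
      = if n = m then (1:ℝ) else 0 := by
  intro n
  induction n with
  | zero =>
    intro m
    cases m with
    | zero => simp [qStirling1, qStirling2]
    | succ m => simp [qStirling1, qStirling2]
  | succ n ih =>
    intro m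
    rw [Finset.sum_range_succ']
    have h0 : qStirling2 q (n+1) 0 = 0 := rfl
    rw [h0]
    cases m with
    | zero =>
      have hz : ∀ i : ℕ, qStirling1 q (i+1) 0 = 0 := fun i => rfl
      simp [hz, qStirling1]
    | succ m =>
      have key : ∀ i : ℕ, qStirling2 q (n+1) (i+1) * qStirling1 q (i+1) (m+1)
          = qStirling2 q n i * qStirling1 q i m
            - qInt q i * (qStirling2 q n i * qStirling1 q i (m+1))
            + qInt q (i+1) * (qStirling2 q n (i+1) * qStirling1 q (i+1) (m+1)) := by
        intro i
        have hpow : q ^ (-(i:ℤ)) = (q ^ i)⁻¹ := by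
          rw [zpow_neg, zpow_natCast]
        have hqi : q ^ i ≠ 0 := pow_ne_zero i hq0
        simp only [qStirling1, qStirling2, hpow]
        field_simp
      rw [Finset.sum_congr rfl fun i _ => key i,
        Finset.sum_add_distrib, Finset.sum_sub_distrib]
      have hz : ∑ i ∈ range (n+1), qInt q (i+1) * (qStirling2 q n (i+1) * qStirling1 q (i+1) (m+1))
          = ∑ i ∈ range (n+1), qInt q i * (qStirling2 q n i * qStirling1 q i (m+1)) := by
        have e1 := Finset.sum_range_succ' (fun k => qInt q k * (qStirling2 q n k * qStirling1 q k (m+1))) (n+1)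
        have e2 := Finset.sum_range_succ (fun k => qInt q k * (qStirling2 q n k * qStirling1 q k (m+1))) (n+1)
        have e3 : qStirling2 q n (n+1) = 0 := qStirling2_vanish q n (n+1) (by omega)
        have e4 : qInt q 0 = 0 := qInt_zero q
        simp only [e3, e4, mul_zero, zero_mul, add_zero, Nat.cast_zero] at e1 e2
        push_cast at e1 e2 ⊢
        rw [e2] at e1
        rw [e1]
      rw [hz, ih m]
      have hne : (n + 1 = m + 1) ↔ (n = m) := by omega
      simp [hne]

theorem qStirling_orthogonality (q : ℝ) (hq0 : q ≠ 0) (hq : q ∈ Set.Ioc (-1 : ℝ) 1)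
    (n m : ℕ) (hmn : m ≤ n) :
    (∑ k ∈ Finset.Icc m n, qStirling1 q n k * qStirling2 q k m) =
      (if n = m then (1 : ℝ) else 0) ∧
    (∑ k ∈ Finset.Icc m n, qStirling2 q n k * qStirling1 q k m) =
      (if n = m then (1 : ℝ) else 0) := by
  have hsub : Finset.Icc m n ⊆ Finset.range (n+1) := by
    intro x hx
    simp only [Finset.mem_Icc] at hx
    simp only [Finset.mem_range]
    omega
  constructor
  · rw [Finset.sum_subset hsub]
    · exact A_eq q hq0 n m
    · intro x hx hxn
      simp only [Finset.mem_range] at hx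
      simp only [Finset.mem_Icc, not_and, not_le] at hxn
      have : x < m := by omega
      rw [qStirling2_vanish q x m this, mul_zero]
  · rw [Finset.sum_subset hsub]
    · exact B_eq q hq0 n m
    · intro x hx hxn
      simp only [Finset.mem_range] at hx
      simp only [Finset.mem_Icc, not_and, not_le] at hxn
      have : x < m := by omega
      rw [qStirling1_vanish q x m this, mul_zero]
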